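/- The polynomial D = a₁b₁a₂² + a₁²a₂b₂ + c₁²a₂c₂ + b₁c₁b₂² + b₁²b₂c₂ + a₁c₁c₂², viewed as an element of the polynomial ring over ℂ in the six variables a₁,b₁,c₁,a₂,b₂,c₂, is irreducible. -/

import Mathlib

open MvPolynomial

/-- The bidegree `(2,2)` apolarity polynomial of the Klein quartic, in the six variables
`a₁ = X 0`, `b₁ = X 1`, `c₁ = X 2`, `a₂ = X 3`, `b₂ = X 4`, `c₂ = X 5`:
`D = a₁b₁a₂² + a₁²a₂b₂ + c₁²a₂c₂ + b₁c₁b₂² + b₁²b₂c₂ + a₁c₁c₂²`. -/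
noncomputable def kleinApolarityPoly : MvPolynomial (Fin 6) ℂ :=
  X 0 * X 1 * X 3 ^ 2 + X 0 ^ 2 * X 3 * X 4 + X 2 ^ 2 * X 3 * X 5
    + X 1 * X 2 * X 4 ^ 2 + X 1 ^ 2 * X 4 * X 5 + X 0 * X 2 * X 5 ^ 2

/-! ### Auxiliary definitions -/

/-- The Klein quartic `x³y + y³z + xz³` in three variables. -/
noncomputable def klein3 : MvPolynomial (Fin 3) ℂ :=
  X 0 ^ 3 * X 1 + X 1 ^ 3 * X 2 + X 0 * X 2 ^ 3

/-- The Klein quartic, viewed as a polynomial in its first variable. -/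
noncomputable def kleinF : Polynomial (MvPolynomial (Fin 2) ℂ) :=
  Polynomial.C (X 0) * Polynomial.X ^ 3 + Polynomial.C (X 1 ^ 3) * Polynomial.X
    + Polynomial.C (X 0 ^ 3 * X 1)

/-- The collapsing substitution `(a₁,b₁,c₁,a₂,b₂,c₂) ↦ (x,y,z,x,y,z)`. -/
noncomputable def collapse : MvPolynomial (Fin 6) ℂ →ₐ[ℂ] MvPolynomial (Fin 3) ℂ :=
  aeval ![X 0, X 1, X 2, X 0, X 1, X 2]

/-- The grading substitution `Xᵢ ↦ t·Xᵢ` into `R[t]`. -/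
noncomputable def lift6 : MvPolynomial (Fin 6) ℂ →ₐ[ℂ] Polynomial (MvPolynomial (Fin 6) ℂ) :=
  aeval (fun i => Polynomial.X * Polynomial.C (X i))

/-! ### Non-divisibility via evaluation -/

theorem notdvd {n : ℕ} (p q : MvPolynomial (Fin n) ℂ) (v : Fin n → ℂ)
    (hp : eval v p = 0) (hq : eval v q = 1) : ¬ p ∣ q := by
  intro h
  have h2 := _root_.map_dvd (eval v) h
  rw [hp, hq] at h2
  simpa using zero_dvd_iff.mp h2

/-! ### Coefficients and degree of `kleinF` -/

theorem coeff_kleinF0 : kleinF.coeff 0 = X 0 ^ 3 * X 1 := by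
  simp only [kleinF, Polynomial.coeff_add, Polynomial.coeff_C_mul, Polynomial.coeff_X_pow,
    Polynomial.coeff_X, Polynomial.coeff_C]
  norm_num

theorem coeff_kleinF1 : kleinF.coeff 1 = X 1 ^ 3 := by
  simp only [kleinF, Polynomial.coeff_add, Polynomial.coeff_C_mul, Polynomial.coeff_X_pow,
    Polynomial.coeff_X, Polynomial.coeff_C]
  norm_num

theorem coeff_kleinF2 : kleinF.coeff 2 = 0 := by
  simp only [kleinF, Polynomial.coeff_add, Polynomial.coeff_C_mul, Polynomial.coeff_X_pow,
    Polynomial.coeff_X, Polynomial.coeff_C]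
  norm_num

theorem coeff_kleinF3 : kleinF.coeff 3 = X 0 := by
  simp only [kleinF, Polynomial.coeff_add, Polynomial.coeff_C_mul, Polynomial.coeff_X_pow,
    Polynomial.coeff_X, Polynomial.coeff_C]
  norm_num

theorem deg_kleinF : kleinF.degree = 3 := by
  unfold kleinF
  compute_degree!

theorem natdeg_kleinF : kleinF.natDegree = 3 := by
  unfold kleinF
  compute_degree!

theorem leading_kleinF : kleinF.leadingCoeff = X 0 := by
  rw [Polynomial.leadingCoeff, natdeg_kleinF, coeff_kleinF3]

/-! ### Primality of single variables -/

theorem X1_ne_zero : (X 1 : MvPolynomial (Fin 2) ℂ) ≠ 0 := X_ne_zero 1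

theorem primeX0' : Prime (X 0 : MvPolynomial (Fin 1) ℂ) := by
  rw [← MulEquiv.prime_iff (MvPolynomial.finSuccEquiv ℂ 0).toRingEquiv.toMulEquiv]
  simpa [finSuccEquiv_X_zero] using Polynomial.prime_X

theorem primeX1 : Prime (X 1 : MvPolynomial (Fin 2) ℂ) := by
  rw [← MulEquiv.prime_iff (MvPolynomial.finSuccEquiv ℂ 1).toRingEquiv.toMulEquiv]
  have h : (1 : Fin 2) = Fin.succ 0 := rfl
  simp only [h, RingEquiv.toMulEquiv_eq_coe, RingEquiv.coe_toMulEquiv,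
    AlgEquiv.toRingEquiv_eq_coe, AlgEquiv.coe_ringEquiv,
    finSuccEquiv_X_succ, Polynomial.prime_C_iff]
  exact primeX0'

theorem primeX0'' : Prime (X 0 : MvPolynomial (Fin 2) ℂ) := by
  rw [← MulEquiv.prime_iff (MvPolynomial.finSuccEquiv ℂ 1).toRingEquiv.toMulEquiv]
  simpa [finSuccEquiv_X_zero] using Polynomial.prime_X

/-! ### Irreducibility of the Klein quartic via Eisenstein -/

theorem kleinF_irred : Irreducible kleinF := by
  apply Polynomial.irreducible_of_eisenstein_criterion
    (P := Ideal.span {(X 1 : MvPolynomial (Fin 2) ℂ)})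
  · exact (Ideal.span_singleton_prime X1_ne_zero).mpr primeX1
  · rw [leading_kleinF, Ideal.mem_span_singleton]
    exact notdvd _ _ ![1, 0] (by simp) (by simp)
  · intro n hn
    rw [deg_kleinF] at hn
    have hn3 : n < 3 := by exact_mod_cast hn
    interval_cases n
    · rw [coeff_kleinF0, Ideal.mem_span_singleton]
      exact ⟨X 0 ^ 3, by ring⟩
    · rw [coeff_kleinF1, Ideal.mem_span_singleton]
      exact ⟨X 1 ^ 2, by ring⟩
    · rw [coeff_kleinF2]
      exact Ideal.zero_mem _
  · rw [deg_kleinF]; decide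
  · rw [coeff_kleinF0, Ideal.span_singleton_pow, Ideal.mem_span_singleton]
    rintro ⟨q, hq⟩
    have h1 : (X 1 : MvPolynomial (Fin 2) ℂ) * (X 0 ^ 3) = X 1 * (X 1 * q) := by
      rw [← mul_assoc, ← sq]; linear_combination hq
    have h2 : (X 0 : MvPolynomial (Fin 2) ℂ) ^ 3 = X 1 * q := mul_left_cancel₀ X1_ne_zero h1
    exact notdvd (X 1) (X 0 ^ 3) ![1, 0] (by simp) (by simp) ⟨q, h2⟩
  · intro r hr
    rw [Polynomial.C_dvd_iff_dvd_coeff] at hr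
    have h3 := hr 3
    have h1 := hr 1
    rw [coeff_kleinF3] at h3
    rw [coeff_kleinF1] at h1
    obtain ⟨s, hs⟩ := h3
    rcases primeX0''.irreducible.isUnit_or_isUnit hs with hu | hu
    · exact hu
    · exfalso
      obtain ⟨u, hu1⟩ := hu.exists_right_inv
      have hX0r : (X 0 : MvPolynomial (Fin 2) ℂ) ∣ r :=
        ⟨u, by rw [hs, mul_assoc, hu1, mul_one]⟩
      exact notdvd (X 0) (X 1 ^ 3) ![0, 1] (by simp) (by simp) (hX0r.trans h1)

theorem finSuccEquiv_klein3 : MvPolynomial.finSuccEquiv ℂ 2 klein3 = kleinF := by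
  have h1 : (1 : Fin 3) = Fin.succ 0 := rfl
  have h2 : (2 : Fin 3) = Fin.succ 1 := rfl
  simp only [klein3, kleinF, map_add, map_mul, map_pow, h1, h2,
    finSuccEquiv_X_zero, finSuccEquiv_X_succ]
  ring

theorem klein3_irred : Irreducible klein3 := by
  rw [← MulEquiv.irreducible_iff ((MvPolynomial.finSuccEquiv ℂ 2).toRingEquiv.toMulEquiv)]
  simp only [RingEquiv.toMulEquiv_eq_coe, RingEquiv.coe_toMulEquiv,
    AlgEquiv.toRingEquiv_eq_coe, AlgEquiv.coe_ringEquiv]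
  rw [finSuccEquiv_klein3]
  exact kleinF_irred

theorem two_klein3_irred : Irreducible ((2 : MvPolynomial (Fin 3) ℂ) * klein3) := by
  rw [irreducible_isUnit_mul]
  · exact klein3_irred
  · have h2 : IsUnit (C (2 : ℂ) : MvPolynomial (Fin 3) ℂ) :=
      IsUnit.map C (isUnit_iff_ne_zero.mpr (by norm_num))
    rwa [map_ofNat] at h2

/-! ### Key computations -/

theorem collapse_D : collapse kleinApolarityPoly = 2 * klein3 := by
  have h5 : (![X 0, X 1, X 2, X 0, X 1, X 2] : Fin 6 → MvPolynomial (Fin 3) ℂ) 5 = X 2 := rfl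
  simp only [h5, collapse, kleinApolarityPoly, klein3, map_add, map_mul, map_pow, aeval_X,
    Matrix.cons_val_zero, Matrix.cons_val_one, Matrix.head_cons, Matrix.cons_val_two,
    Matrix.tail_cons, Matrix.cons_val_three, Matrix.cons_val_four, Matrix.cons_val']
  ring

theorem lift6_D :
    lift6 kleinApolarityPoly = Polynomial.C kleinApolarityPoly * Polynomial.X ^ 4 := by
  simp only [lift6, kleinApolarityPoly, map_add, map_mul, map_pow, aeval_X]
  ring

theorem constantCoeff_lift6 (g : MvPolynomial (Fin 6) ℂ) :
    Polynomial.constantCoeff (lift6 g) = C (constantCoeff g) := by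
  have h : (Polynomial.constantCoeff).comp (lift6.toRingHom)
      = (C : ℂ →+* MvPolynomial (Fin 6) ℂ).comp
          (constantCoeff : MvPolynomial (Fin 6) ℂ →+* ℂ) := by
    apply MvPolynomial.ringHom_ext
    · intro r; simp [lift6]
    · intro i; simp [lift6]
  exact RingHom.congr_fun h g

theorem evalOne_lift6 (g : MvPolynomial (Fin 6) ℂ) : Polynomial.eval 1 (lift6 g) = g := by
  have h : (Polynomial.evalRingHom (1 : MvPolynomial (Fin 6) ℂ)).comp (lift6.toRingHom)
      = RingHom.id _ := by
    apply MvPolynomial.ringHom_ext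
    · intro r; simp [lift6]
    · intro i; simp [lift6]
  exact RingHom.congr_fun h g

theorem constantCoeff_collapse (g : MvPolynomial (Fin 6) ℂ) :
    constantCoeff (collapse g) = constantCoeff g := by
  have h : (constantCoeff : MvPolynomial (Fin 3) ℂ →+* ℂ).comp (collapse.toRingHom)
      = (constantCoeff : MvPolynomial (Fin 6) ℂ →+* ℂ) := by
    apply MvPolynomial.ringHom_ext
    · intro r; simp [collapse]
    · intro i
      have h5 : (![X 0, X 1, X 2, X 0, X 1, X 2] : Fin 6 → MvPolynomial (Fin 3) ℂ) 5 = X 2 := rfl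
      fin_cases i <;> simp [collapse, h5]
  exact RingHom.congr_fun h g

theorem D_ne_zero : kleinApolarityPoly ≠ 0 := by
  intro h0
  have : collapse kleinApolarityPoly = 0 := by rw [h0, map_zero]
  rw [collapse_D] at this
  exact two_klein3_irred.ne_zero this

theorem unit_aux {g h : MvPolynomial (Fin 6) ℂ} (hgh : kleinApolarityPoly = g * h)
    (hu : IsUnit (collapse g)) : IsUnit g := by
  have hmul : lift6 g * lift6 h = Polynomial.C kleinApolarityPoly * Polynomial.X ^ 4 := by
    rw [← map_mul, ← hgh, lift6_D]
  have hCD : Polynomial.C kleinApolarityPoly ≠ 0 := by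
    simpa using D_ne_zero
  have hrhs0 : Polynomial.C kleinApolarityPoly * Polynomial.X ^ 4
      ≠ (0 : Polynomial (MvPolynomial (Fin 6) ℂ)) :=
    mul_ne_zero hCD (pow_ne_zero _ Polynomial.X_ne_zero)
  have hg0 : lift6 g ≠ 0 := fun e => hrhs0 (by rw [← hmul, e, zero_mul])
  have hh0 : lift6 h ≠ 0 := fun e => hrhs0 (by rw [← hmul, e, mul_zero])
  have hdeg : (lift6 g).natDegree + (lift6 h).natDegree = 4 := by
    rw [← Polynomial.natDegree_mul hg0 hh0, hmul,
      Polynomial.natDegree_C_mul_X_pow 4 _ D_ne_zero]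
  have htr : (lift6 g).natTrailingDegree + (lift6 h).natTrailingDegree = 4 := by
    rw [← Polynomial.natTrailingDegree_mul hg0 hh0, hmul,
      Polynomial.natTrailingDegree_mul_X_pow hCD, Polynomial.natTrailingDegree_C, zero_add]
  have hcc : constantCoeff g ≠ 0 := by
    have h1 : IsUnit (constantCoeff (collapse g)) := hu.map constantCoeff
    rw [constantCoeff_collapse] at h1
    exact h1.ne_zero
  have h0g : (lift6 g).coeff 0 ≠ 0 := by
    rw [← Polynomial.constantCoeff_apply, constantCoeff_lift6]
    simpa using hcc
  have htg0 : (lift6 g).natTrailingDegree = 0 :=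
    Polynomial.natTrailingDegree_eq_zero.mpr (Or.inr h0g)
  have hdg0 : (lift6 g).natDegree = 0 := by
    have hle := Polynomial.natTrailingDegree_le_natDegree (p := lift6 h)
    omega
  have hgC : lift6 g = Polynomial.C (C (constantCoeff g)) := by
    rw [Polynomial.eq_C_of_natDegree_eq_zero hdg0, ← Polynomial.constantCoeff_apply,
      constantCoeff_lift6]
  have hgval : g = C (constantCoeff g) := by
    have he := evalOne_lift6 g
    rw [hgC, Polynomial.eval_C] at he
    exact he.symm
  rw [hgval]
  exact IsUnit.map C hcc.isUnit

/-- **Irreducibility of the apolarity polynomial of the Klein quartic** (the hypersurface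
`𝒫₂ ⊂ ℙ²×ℙ²` is irreducible). -/
theorem kleinApolarityPoly_irreducible : Irreducible kleinApolarityPoly := by
  constructor
  · intro hD
    exact two_klein3_irred.not_isUnit (collapse_D ▸ hD.map collapse)
  · intro g h hgh
    have hφ : (2 : MvPolynomial (Fin 3) ℂ) * klein3 = collapse g * collapse h := by
      rw [← map_mul, ← hgh, collapse_D]
    rcases two_klein3_irred.isUnit_or_isUnit hφ with hu | hu
    · exact Or.inl (unit_aux hgh hu)
    · exact Or.inr (unit_aux (hgh.trans (mul_comm g h)) hu)
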